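/- If G is a finite König–Egerváry graph, then the induced subgraph G − N[core(G)] has a perfect matching and is itself a König–Egerváry graph. -/

import Mathlib

namespace KEPaper

open SimpleGraph

variable {V : Type*}

/-- `nbhd G S` is the set of vertices having a neighbor in `S`. -/
def nbhd (G : SimpleGraph V) (S : Set V) : Set V := {v | ∃ w ∈ S, G.Adj v w}

/-- `S` is an independent set of `G`: no two vertices of `S` are adjacent. -/
def IsIndep (G : SimpleGraph V) (S : Set V) : Prop :=
  S.Pairwise fun u v => ¬ G.Adj u v

/-- The independence number `α(G)`: maximum cardinality of an independent set. -/
noncomputable def indepNum (G : SimpleGraph V) : ℕ :=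
  sSup {n | ∃ S : Set V, IsIndep G S ∧ S.ncard = n}

/-- The matching number `μ(G)`: maximum cardinality of a matching. -/
noncomputable def matchNum (G : SimpleGraph V) : ℕ :=
  sSup {n | ∃ M : Subgraph G, M.IsMatching ∧ M.edgeSet.ncard = n}

/-- `S` is a maximum independent set of `G`. -/
def IsMaxIndep (G : SimpleGraph V) (S : Set V) : Prop :=
  IsIndep G S ∧ S.ncard = indepNum G

/-- The critical difference `d(G) = max {|S| - |N(S)| : S independent}`. -/
noncomputable def critDiff (G : SimpleGraph V) : ℤ :=
  sSup {d : ℤ | ∃ S : Set V, IsIndep G S ∧ d = (S.ncard : ℤ) - ((nbhd G S).ncard : ℤ)}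

/-- `S` is a critical independent set: independent with `|S| - |N(S)| = d(G)`. -/
def IsCritIndep (G : SimpleGraph V) (S : Set V) : Prop :=
  IsIndep G S ∧ (S.ncard : ℤ) - ((nbhd G S).ncard : ℤ) = critDiff G

/-- `core G` is the intersection of all maximum independent sets of `G`. -/
def core (G : SimpleGraph V) : Set V := ⋂ S ∈ {S : Set V | IsMaxIndep G S}, S

/-- `G` is a König–Egerváry graph: `|V(G)| = α(G) + μ(G)`. -/
def KoenigEgervary (G : SimpleGraph V) : Prop :=
  Nat.card V = indepNum G + matchNum G

/-- `A` is a local maximum independent set of `G`: it is a maximum independent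
set of the subgraph of `G` induced by `N[A] = A ∪ N(A)`. -/
def IsLocalMaxIndep (G : SimpleGraph V) (A : Set V) : Prop :=
  IsMaxIndep (G.induce (A ∪ nbhd G A)) {x : ↥(A ∪ nbhd G A) | ↑x ∈ A}

set_option linter.unusedSectionVars false

section Aux

variable {G : SimpleGraph V}

lemma indepSet_nonempty (G : SimpleGraph V) :
    {n | ∃ S : Set V, IsIndep G S ∧ S.ncard = n}.Nonempty :=
  ⟨0, ∅, Set.pairwise_empty _, by simp⟩

lemma matchSet_nonempty (G : SimpleGraph V) :
    {n | ∃ M : Subgraph G, M.IsMatching ∧ M.edgeSet.ncard = n}.Nonempty :=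
  ⟨0, ⊥, fun v hv => absurd hv (by simp [Subgraph.verts_bot]), by simp [Subgraph.edgeSet_bot]⟩

lemma toEdge_mem {M : Subgraph G} (hM : M.IsMatching) (v : M.verts) :
    ↑v ∈ (hM.toEdge v : Sym2 V) := by
  simp only [Subgraph.IsMatching.toEdge]
  exact Sym2.mem_mk_left _ _

lemma adj_of_toEdge_eq {M : Subgraph G} (hM : M.IsMatching)
    {v w : M.verts} (h : hM.toEdge v = hM.toEdge w) : (v : V) = w ∨ M.Adj ↑v ↑w := by
  by_cases hvw : (v : V) = w
  · exact Or.inl hvw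
  · right
    have h1 : (v : V) ∈ (hM.toEdge w : Sym2 V) := h ▸ toEdge_mem hM v
    have h2 : (w : V) ∈ (hM.toEdge w : Sym2 V) := toEdge_mem hM w
    have he : ((hM.toEdge w : Sym2 V)) = s(↑v, ↑w) := (Sym2.mem_and_mem_iff hvw).mp ⟨h1, h2⟩
    have hmem : ((hM.toEdge w : Sym2 V)) ∈ M.edgeSet := (hM.toEdge w).2
    rw [he] at hmem
    exact (Subgraph.mem_edgeSet).mp hmem

lemma mem_core_iff {x : V} : x ∈ core G ↔ ∀ S : Set V, IsMaxIndep G S → x ∈ S := by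
  simp [core]

variable [Finite V]

lemma indepSet_bddAbove : BddAbove {n | ∃ S : Set V, IsIndep G S ∧ S.ncard = n} := by
  refine ⟨Nat.card V, fun n hn => ?_⟩
  obtain ⟨S, _, rfl⟩ := hn
  simpa [Set.ncard_univ] using Set.ncard_le_ncard (Set.subset_univ S) Set.finite_univ

lemma le_indepNum {S : Set V} (hS : IsIndep G S) : S.ncard ≤ indepNum G :=
  le_csSup indepSet_bddAbove ⟨S, hS, rfl⟩

lemma exists_maxIndep (G : SimpleGraph V) [Finite V] : ∃ S : Set V, IsMaxIndep G S := by
  obtain ⟨S, hS, h⟩ := Nat.sSup_mem (indepSet_nonempty G) indepSet_bddAbove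
  exact ⟨S, hS, h⟩

lemma matchSet_bddAbove :
    BddAbove {n | ∃ M : Subgraph G, M.IsMatching ∧ M.edgeSet.ncard = n} := by
  refine ⟨Nat.card (Sym2 V), fun n hn => ?_⟩
  obtain ⟨M, _, rfl⟩ := hn
  simpa [Set.ncard_univ] using Set.ncard_le_ncard (Set.subset_univ M.edgeSet) Set.finite_univ

lemma le_matchNum {M : Subgraph G} (hM : M.IsMatching) : M.edgeSet.ncard ≤ matchNum G :=
  le_csSup matchSet_bddAbove ⟨M, hM, rfl⟩

lemma exists_maxMatching (G : SimpleGraph V) [Finite V] :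
    ∃ M : Subgraph G, M.IsMatching ∧ M.edgeSet.ncard = matchNum G :=
  Nat.sSup_mem (matchSet_nonempty G) matchSet_bddAbove

lemma toEdge_surjOn {M : Subgraph G} (hM : M.IsMatching) {T : Set V} (hT : IsIndep G T) :
    Function.Surjective (fun p : ↥(M.verts \ T) => hM.toEdge ⟨↑p, p.2.1⟩) := by
  rintro ⟨e, he⟩
  induction e using Sym2.ind with
  | _ a b =>
    rw [Subgraph.mem_edgeSet] at he
    have hab : a ≠ b := (M.adj_sub he).ne
    have hor : a ∉ T ∨ b ∉ T := by
      by_contra h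
      push_neg at h
      exact hT h.1 h.2 hab (M.adj_sub he)
    cases hor with
    | inl ha => exact ⟨⟨a, M.edge_vert he, ha⟩, hM.toEdge_eq_of_adj he⟩
    | inr hb =>
      exact ⟨⟨b, M.edge_vert he.symm, hb⟩,
        (hM.toEdge_eq_of_adj he.symm).trans (Subtype.ext Sym2.eq_swap)⟩

lemma matchcard_le {M : Subgraph G} (hM : M.IsMatching) {T : Set V} (hT : IsIndep G T) :
    M.edgeSet.ncard ≤ (M.verts \ T).ncard := by
  rw [← Nat.card_coe_set_eq, ← Nat.card_coe_set_eq]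
  exact Nat.card_le_card_of_surjective _ (toEdge_surjOn hM hT)

lemma key (hG : KoenigEgervary G) {M : Subgraph G} (hM : M.IsMatching)
    (hMc : M.edgeSet.ncard = matchNum G) {T : Set V} (hT : IsMaxIndep G T)
    {v : V} (hv : v ∉ T) : ∃ w, M.Adj v w ∧ w ∈ T := by
  have hTc : (Tᶜ).ncard = matchNum G := by
    have h1 := Set.ncard_add_ncard_compl T
    rw [hT.2] at h1
    rw [KoenigEgervary] at hG
    omega
  have hsub : M.verts \ T ⊆ Tᶜ := fun x hx => hx.2
  have hle : (Tᶜ).ncard ≤ (M.verts \ T).ncard := by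
    rw [hTc, ← hMc]; exact matchcard_le hM hT.1
  have heq : M.verts \ T = Tᶜ := Set.eq_of_subset_of_ncard_le hsub hle (Set.toFinite _)
  have hvP : v ∈ M.verts \ T := by rw [heq]; exact hv
  obtain ⟨w, hw, huniq⟩ := hM hvP.1
  refine ⟨w, hw, ?_⟩
  by_contra hwT
  have hbij : Function.Bijective (fun p : ↥(M.verts \ T) => hM.toEdge ⟨↑p, p.2.1⟩) := by
    refine (toEdge_surjOn hM hT.1).bijective_of_nat_card_le ?_
    rw [Nat.card_coe_set_eq, Nat.card_coe_set_eq, heq, hTc, hMc]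
  have hwP : w ∈ M.verts \ T := ⟨M.edge_vert hw.symm, hwT⟩
  have hc : (⟨v, hvP⟩ : ↥(M.verts \ T)) = ⟨w, hwP⟩ := by
    apply hbij.1
    show hM.toEdge ⟨v, hvP.1⟩ = hM.toEdge ⟨w, hwP.1⟩
    rw [hM.toEdge_eq_of_adj hw, hM.toEdge_eq_of_adj hw.symm]
    exact Subtype.ext Sym2.eq_swap
  exact (M.adj_sub hw).ne (congrArg Subtype.val hc)

lemma alphaMu_le (G : SimpleGraph V) : indepNum G + matchNum G ≤ Nat.card V := by
  obtain ⟨S, hS⟩ := exists_maxIndep G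
  obtain ⟨M, hM, hMc⟩ := exists_maxMatching G
  have h1 : M.edgeSet.ncard ≤ (M.verts \ S).ncard := matchcard_le hM hS.1
  have h2 : (M.verts \ S).ncard ≤ (Sᶜ).ncard :=
    Set.ncard_le_ncard (fun x hx => hx.2) (Set.toFinite _)
  have h3 := Set.ncard_add_ncard_compl S
  rw [hS.2] at h3
  rw [← hMc]
  omega

end Aux

/-- If `G` is a finite König–Egerváry graph, then `G - N[core(G)]` has a
perfect matching and is itself a König–Egerváry graph. -/
theorem remove_closed_nbhd_core [Finite V] (G : SimpleGraph V)
    (hG : KoenigEgervary G) :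
    (∃ M : Subgraph (G.induce (core G ∪ nbhd G (core G))ᶜ), M.IsPerfectMatching) ∧
      KoenigEgervary (G.induce (core G ∪ nbhd G (core G))ᶜ) := by
  classical
  set Wset : Set V := (core G ∪ nbhd G (core G))ᶜ with hWdef
  obtain ⟨S, hS⟩ := exists_maxIndep G
  obtain ⟨M, hM, hMc⟩ := exists_maxMatching G
  have hstep : ∀ x ∈ Wset, ∃ y, M.Adj x y ∧ y ∈ Wset := by
    intro x hx
    rw [hWdef, Set.mem_compl_iff, Set.mem_union] at hx
    push_neg at hx
    obtain ⟨hx1, hx2⟩ := hx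
    have hex : ¬ ∀ T : Set V, IsMaxIndep G T → x ∈ T := fun h => hx1 (mem_core_iff.mpr h)
    push_neg at hex
    obtain ⟨T, hT, hxT⟩ := hex
    obtain ⟨y, hxy, hyT⟩ := key hG hM hMc hT hxT
    refine ⟨y, hxy, ?_⟩
    rw [hWdef, Set.mem_compl_iff, Set.mem_union]
    push_neg
    constructor
    · intro hycore
      exact hx2 ⟨y, hycore, M.adj_sub hxy⟩
    · rintro ⟨c, hc, hyc⟩
      apply hx1
      rw [mem_core_iff]
      intro T' hT'
      have hcT' : c ∈ T' := mem_core_iff.mp hc T' hT'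
      have hyT' : y ∉ T' := fun hyT' => hT'.1 hyT' hcT' hyc.ne hyc
      obtain ⟨w', hyw', hw'T'⟩ := key hG hM hMc hT' hyT'
      obtain ⟨z, hz, huniq⟩ := hM (M.edge_vert hxy.symm)
      have h1 : x = z := huniq x hxy.symm
      have h2 : w' = z := huniq w' hyw'
      rw [h1, ← h2]; exact hw'T'
  let M' : Subgraph (G.induce Wset) :=
    { verts := Set.univ
      Adj := fun a b => M.Adj ↑a ↑b
      adj_sub := fun h => M.adj_sub h
      edge_vert := fun _ => Set.mem_univ _
      symm := ⟨fun a b h => M.adj_symm h⟩ }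
  have hM'M : M'.IsMatching := by
    rintro ⟨x, hxW⟩ _
    obtain ⟨y, hxy, hyW⟩ := hstep x hxW
    refine ⟨⟨y, hyW⟩, hxy, ?_⟩
    rintro ⟨z, hzW⟩ hz
    obtain ⟨u, hu, huniq⟩ := hM (M.edge_vert hxy)
    exact Subtype.ext ((huniq z hz).trans (huniq y hxy).symm)
  have hM'P : M'.IsPerfectMatching := ⟨hM'M, fun v => Set.mem_univ v⟩
  refine ⟨⟨M', hM'P⟩, ?_⟩
  set A : Set ↥Wset := {x : ↥Wset | ↑x ∈ S} with hAdef
  have hAind : IsIndep (G.induce Wset) A := by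
    intro a ha b hb hab
    exact hS.1 ha hb (fun h => hab (Subtype.ext h))
  have hA : A.ncard ≤ indepNum (G.induce Wset) := le_indepNum hAind
  have hk : M'.edgeSet.ncard ≤ matchNum (G.induce Wset) := le_matchNum hM'M
  have hAc : (Aᶜ).ncard ≤ M'.edgeSet.ncard := by
    rw [← Nat.card_coe_set_eq, ← Nat.card_coe_set_eq]
    have hinj : Function.Injective
        (fun x : ↥(Aᶜ) => hM'M.toEdge ⟨↑x, Set.mem_univ _⟩) := by
      intro x1 x2 hx
      rcases adj_of_toEdge_eq hM'M hx with h | h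
      · exact Subtype.ext h
      · exfalso
        have hx1S : ((x1 : ↥Wset) : V) ∉ S := x1.2
        have hx2S : ((x2 : ↥Wset) : V) ∉ S := x2.2
        obtain ⟨w, hw, hwS⟩ := key hG hM hMc hS hx1S
        obtain ⟨u, hu, huniq⟩ := hM (M.edge_vert h)
        have heq2 : ((x2 : ↥Wset) : V) = w := (huniq _ h).trans (huniq w hw).symm
        exact hx2S (by rw [heq2]; exact hwS)
    exact Nat.card_le_card_of_injective _ hinj
  have hcardW : Nat.card ↥Wset = A.ncard + (Aᶜ).ncard := (Set.ncard_add_ncard_compl A).symm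
  have hge : Nat.card ↥Wset ≤ indepNum (G.induce Wset) + matchNum (G.induce Wset) := by omega
  exact le_antisymm hge (alphaMu_le (G.induce Wset))

end KEPaper
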